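/- Let X be a set of non-idempotent elements of B(n). Then X is a face of the complex IH_0(B(n)) (defined via chains of inverse subsemigroups containing 0) if and only if the underlying undirected graph of X is a forest. Consequently, IH_0(B(n)) is isomorphic to the graphic matroid of the complete graph K_n. -/

import Mathlib

/-- The aperiodic Brandt semigroup `B(n)` on `({1..n} × {1..n}) ∪ {0}`,
with `none` playing the role of the zero element. -/
abbrev B (n : ℕ) := Option (Fin n × Fin n)

/-- Multiplication in `B(n)`: `(i,j)(k,l) = (i,l)` if `j = k`, and `0` otherwise. -/
def bmul {n : ℕ} : B n → B n → B n
  | some (i, j), some (k, l) => if j = k then some (i, l) else none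
  | _, _ => none

/-- A subset of `B(n)` is a subsemigroup if it is closed under multiplication. -/
def IsSub {n : ℕ} (T : Set (B n)) : Prop :=
  ∀ x ∈ T, ∀ y ∈ T, bmul x y ∈ T

/-- The subsemigroup of `B(n)` generated by a subset. -/
def gen {n : ℕ} (X : Set (B n)) : Set (B n) :=
  ⋂₀ {T | IsSub T ∧ X ⊆ T}

/-- `X` is a face of the subsemigroup complex `H(B(n))`: it admits an enumeration
producing a strictly increasing chain of generated subsemigroups. -/
def IsFace {n : ℕ} (X : Set (B n)) : Prop :=
  ∃ l : List (B n), l.Nodup ∧ {x | x ∈ l} = X ∧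
    ∀ (i : ℕ) (h : i < l.length), l.get ⟨i, h⟩ ∉ gen {x | x ∈ l.take i}

/-- A facet is a maximal face. -/
def IsFacet {n : ℕ} (X : Set (B n)) : Prop :=
  IsFace X ∧ ∀ Y : Set (B n), IsFace Y → X ⊆ Y → X = Y

/-- Product `x * y₁ * ⋯ * y_k` in `B(n)`. -/
def bprod {n : ℕ} : B n → List (B n) → B n
  | x, [] => x
  | x, y :: l => bprod (bmul x y) l

/-- Closure under the inverse operation `(i,j) ↦ (j,i)`. -/
def InvClosed {n : ℕ} (T : Set (B n)) : Prop :=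
  ∀ i j : Fin n, some (i, j) ∈ T → some (j, i) ∈ T

/-- A nilpotent subsemigroup of `B(n)` containing `0`: some power is `{0}`. -/
def IsNilpSub {n : ℕ} (T : Set (B n)) : Prop :=
  IsSub T ∧ none ∈ T ∧ ∃ k : ℕ, 1 ≤ k ∧
    ∀ (x : B n) (l : List (B n)), x ∈ T → (∀ y ∈ l, y ∈ T) →
      l.length + 1 = k → bprod x l = none
/-- The inverse subsemigroup of `B(n)` containing `0` generated by `X`. -/
def invGen0 {n : ℕ} (X : Set (B n)) : Set (B n) :=
  ⋂₀ {T | IsSub T ∧ InvClosed T ∧ none ∈ T ∧ X ⊆ T}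


open SimpleGraph in
private lemma brandt_mem_invGen0_of_reachable {n : ℕ} (Y : Set (B n)) {i j : Fin n} (hij : i ≠ j)
    (h : (fromRel (fun a b : Fin n => some (a, b) ∈ Y)).Reachable i j) :
    some (i, j) ∈ invGen0 Y := by
  intro T hT
  obtain ⟨hSub, hInv, -, hYT⟩ := hT
  have hadj : ∀ a b : Fin n, (fromRel (fun a b : Fin n => some (a, b) ∈ Y)).Adj a b →
      some (a, b) ∈ T := by
    intro a b hab
    rw [fromRel_adj] at hab
    rcases hab.2 with h1 | h1
    · exact hYT h1
    · exact hInv _ _ (hYT h1)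
  obtain ⟨p⟩ := h
  revert p
  suffices H : ∀ {a b : Fin n}, (fromRel (fun a b : Fin n => some (a, b) ∈ Y)).Walk a b →
      a ≠ b → some (a, b) ∈ T by
    intro p; exact H p hij
  intro a b p
  induction p with
  | nil => intro h; exact absurd rfl h
  | @cons u v w h q ih =>
    intro _
    by_cases hvw : v = w
    · subst hvw; exact hadj _ _ h
    · have h1 := hadj _ _ h
      have h2 := ih hvw
      have h3 := hSub _ h1 _ h2
      simpa [bmul] using h3

open SimpleGraph in
private lemma brandt_reachable_of_mem_invGen0 {n : ℕ} (Y : Set (B n))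
    (hY : ∀ x ∈ Y, ∃ i j : Fin n, i ≠ j ∧ x = some (i, j)) {i j : Fin n}
    (h : some (i, j) ∈ invGen0 Y) :
    (fromRel (fun a b : Fin n => some (a, b) ∈ Y)).Reachable i j := by
  set G := fromRel (fun a b : Fin n => some (a, b) ∈ Y) with hG
  set T : Set (B n) := {x | x = none ∨ ∃ a b : Fin n, x = some (a, b) ∧ G.Reachable a b} with hT
  have hmem := h T ?_
  · rcases hmem with h0 | ⟨a, b, hab, hr⟩
    · exact absurd h0 (by simp)
    · obtain ⟨rfl, rfl⟩ : i = a ∧ j = b := by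
        have := hab; simp only [Option.some.injEq, Prod.mk.injEq] at this; exact this
      exact hr
  refine ⟨?_, ?_, Or.inl rfl, ?_⟩
  · intro x hx y hy
    rcases hx with rfl | ⟨a, b, rfl, hrab⟩
    · exact Or.inl rfl
    rcases hy with rfl | ⟨c, d, rfl, hrcd⟩
    · exact Or.inl rfl
    by_cases hbc : b = c
    · subst hbc
      exact Or.inr ⟨a, d, by simp [bmul], hrab.trans hrcd⟩
    · exact Or.inl (by simp [bmul, hbc])
  · intro a b hab
    rcases hab with h0 | ⟨c, d, hcd, hr⟩
    · exact absurd h0 (by simp)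
    · obtain ⟨rfl, rfl⟩ : a = c ∧ b = d := by
        simp only [Option.some.injEq, Prod.mk.injEq] at hcd; exact hcd
      exact Or.inr ⟨b, a, rfl, hr.symm⟩
  · intro x hx
    obtain ⟨a, b, hab, rfl⟩ := hY x hx
    refine Or.inr ⟨a, b, rfl, Adj.reachable ?_⟩
    rw [hG, fromRel_adj]
    exact ⟨hab, Or.inl hx⟩

open SimpleGraph in
private lemma brandt_acyclic_sup_edge {V : Type*} {G : SimpleGraph V} (hG : G.IsAcyclic)
    {u v : V} (hr : ¬ G.Reachable u v) :
    (G ⊔ fromEdgeSet {s(u, v)}).IsAcyclic := by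
  intro w p hp
  by_cases he : s(u, v) ∈ p.edges
  · have hkey := (adj_and_reachable_delete_edges_iff_exists_cycle
      (G := G ⊔ fromEdgeSet {s(u, v)}) (v := u) (w := v)).2 ⟨w, p, hp, he⟩
    apply hr
    refine hkey.2.mono ?_
    intro a b hab
    rw [deleteEdges_adj, sup_adj, fromEdgeSet_adj] at hab
    obtain ⟨h1 | h1, h2⟩ := hab
    · exact h1
    · exact absurd h1.1 h2
  · have hsub : ∀ e ∈ p.edges, e ∈ G.edgeSet := by
      intro e hep
      have h1 := p.edges_subset_edgeSet hep
      induction e with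
      | _ a b =>
        rw [mem_edgeSet] at h1 ⊢
        rw [sup_adj, fromEdgeSet_adj] at h1
        rcases h1 with h1 | ⟨h1, -⟩
        · exact h1
        · rw [Set.mem_singleton_iff] at h1
          rw [h1] at hep
          exact absurd hep he
    exact hG (p.transfer G hsub) (hp.transfer hsub)

open SimpleGraph in
private lemma brandt_graph_append {n : ℕ} (l : List (B n)) {u v : Fin n} (huv : u ≠ v) :
    fromRel (fun a b : Fin n => some (a, b) ∈ {x | x ∈ l ++ [some (u, v)]}) =
      fromRel (fun a b : Fin n => some (a, b) ∈ {x | x ∈ l}) ⊔ fromEdgeSet {s(u, v)} := by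
  ext a b
  simp only [fromRel_adj, sup_adj, fromEdgeSet_adj, Set.mem_setOf_eq, List.mem_append,
    List.mem_singleton, Option.some.injEq, Prod.mk.injEq, Set.mem_singleton_iff, Sym2.eq_iff]
  constructor
  · rintro ⟨hab, h⟩
    rcases h with (h | ⟨rfl, rfl⟩) | (h | ⟨rfl, rfl⟩)
    · exact Or.inl ⟨hab, Or.inl h⟩
    · exact Or.inr ⟨Or.inl ⟨rfl, rfl⟩, hab⟩
    · exact Or.inl ⟨hab, Or.inr h⟩
    · exact Or.inr ⟨Or.inr ⟨rfl, rfl⟩, hab⟩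
  · rintro (⟨hab, h | h⟩ | ⟨(⟨rfl, rfl⟩ | ⟨rfl, rfl⟩), hab⟩)
    · exact ⟨hab, Or.inl (Or.inl h)⟩
    · exact ⟨hab, Or.inr (Or.inl h)⟩
    · exact ⟨hab, Or.inl (Or.inr ⟨rfl, rfl⟩)⟩
    · exact ⟨hab, Or.inr (Or.inr ⟨rfl, rfl⟩)⟩

open SimpleGraph in
private lemma brandt_acyclic_of_chain {n : ℕ} (l : List (B n))
    (hXl : ∀ x ∈ l, ∃ i j : Fin n, i ≠ j ∧ x = some (i, j))
    (hchain : ∀ (i : ℕ) (h : i < l.length), l.get ⟨i, h⟩ ∉ invGen0 {x | x ∈ l.take i}) :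
    (fromRel (fun a b : Fin n => some (a, b) ∈ {x | x ∈ l})).IsAcyclic := by
  induction l using List.reverseRecOn with
  | nil =>
    intro w p hp
    cases p with
    | nil => exact hp.ne_nil rfl
    | cons h q => rw [fromRel_adj] at h; simp at h
  | append_singleton l a ih =>
    obtain ⟨u, v, huv, rfl⟩ := hXl a (by simp)
    have hXl' : ∀ x ∈ l, ∃ i j : Fin n, i ≠ j ∧ x = some (i, j) := fun x hx =>
      hXl x (by simp [hx])
    have hchain' : ∀ (i : ℕ) (h : i < l.length), l.get ⟨i, h⟩ ∉ invGen0 {x | x ∈ l.take i} := by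
      intro i h
      have h2 : i < (l ++ [some (u, v)]).length := by simp; omega
      have h3 := hchain i h2
      rwa [List.take_append_of_le_length (le_of_lt h),
        show (l ++ [some (u, v)]).get ⟨i, h2⟩ = l.get ⟨i, h⟩ by
          simp [List.get_eq_getElem, List.getElem_append_left h]] at h3
    have hacyc := ih hXl' hchain'
    have h2 : l.length < (l ++ [some (u, v)]).length := by simp
    have hlast := hchain l.length h2
    rw [show (l ++ [some (u, v)]).get ⟨l.length, h2⟩ = some (u, v) by
        simp [List.get_eq_getElem],
      List.take_left] at hlast
    have hnr : ¬ (fromRel (fun a b : Fin n => some (a, b) ∈ {x | x ∈ l})).Reachable u v :=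
      fun hreach => hlast (brandt_mem_invGen0_of_reachable _ huv hreach)
    rw [brandt_graph_append l huv]
    exact brandt_acyclic_sup_edge hacyc hnr

/-- A set `X` of non-idempotents of `B(n)` (one orientation per pair) is a face of
`IH₀(B(n))`, the complex of chains of inverse subsemigroups containing `0`, iff the
underlying undirected graph of `X` is a forest: `IH₀(B(n))` is the graphic matroid
of `K_n`. -/
theorem stmt12 (n : ℕ) (X : Set (B n))
    (hX : ∀ x ∈ X, ∃ i j : Fin n, i ≠ j ∧ x = some (i, j))
    (hor : ∀ i j : Fin n, some (i, j) ∈ X → some (j, i) ∉ X) :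
    (∃ l : List (B n), l.Nodup ∧ {x | x ∈ l} = X ∧
        ∀ (i : ℕ) (h : i < l.length), l.get ⟨i, h⟩ ∉ invGen0 {x | x ∈ l.take i}) ↔
      (SimpleGraph.fromRel (fun i j : Fin n => some (i, j) ∈ X)).IsAcyclic := by
  classical
  constructor
  · rintro ⟨l, -, hset, hchain⟩
    have := brandt_acyclic_of_chain l (fun x hx => hX x (hset ▸ hx)) hchain
    rwa [show {x | x ∈ l} = X from hset] at this
  · intro hac
    refine ⟨X.toFinite.toFinset.toList, Finset.nodup_toList _, ?_, ?_⟩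
    · ext x; simp only [Set.mem_setOf_eq, Finset.mem_toList, Set.Finite.mem_toFinset]
    · set l := X.toFinite.toFinset.toList with hl
      intro i h hmem
      have hnd : l.Nodup := Finset.nodup_toList _
      have hmemX : ∀ y ∈ l, y ∈ X := by intro y hy; simpa [hl] using hy
      have hxX : l.get ⟨i, h⟩ ∈ X := hmemX _ (List.get_mem l ⟨i, h⟩)
      obtain ⟨a, b, hab, hxe⟩ := hX _ hxX
      rw [hxe] at hmem
      have hsubX : ∀ y ∈ l.take i, y ∈ X := fun y hy => hmemX y (List.mem_of_mem_take hy)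
      have hreach := brandt_reachable_of_mem_invGen0 _ (fun y hy => hX y (hsubX y hy)) hmem
      have hnotmem : ∀ c d : Fin n, some (c, d) ∈ l.take i → (c, d) ≠ (a, b) := by
        intro c d hcd heq
        rw [Prod.mk.injEq] at heq
        obtain ⟨rfl, rfl⟩ := heq
        obtain ⟨j, hj, hget⟩ := List.getElem_of_mem hcd
        rw [List.getElem_take] at hget
        have hj' : j < i ∧ j < l.length := by simpa using hj
        obtain ⟨hji, hj2⟩ := hj'
        have : l[j] = l[i] := by rw [hget, ← hxe]; simp [List.get_eq_getElem]
        rw [hnd.getElem_inj_iff] at this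
        omega
      have hadjX : (SimpleGraph.fromRel (fun a b : Fin n => some (a, b) ∈ X)).Adj a b := by
        rw [SimpleGraph.fromRel_adj]; exact ⟨hab, Or.inl (hxe ▸ hxX)⟩
      have hbridge := (SimpleGraph.isAcyclic_iff_forall_adj_isBridge.mp hac) hadjX
      rw [SimpleGraph.isBridge_iff] at hbridge
      apply hbridge
      refine hreach.mono ?_
      intro c d hcd
      rw [SimpleGraph.fromRel_adj] at hcd
      obtain ⟨hcd1, hcd2⟩ := hcd
      have hne : s(c, d) ≠ s(a, b) := by
        intro heq
        rw [Sym2.eq_iff] at heq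
        rcases heq with ⟨rfl, rfl⟩ | ⟨rfl, rfl⟩
        · rcases hcd2 with h1 | h1
          · exact hnotmem _ _ h1 rfl
          · exact hor _ _ (hsubX _ h1) (hxe ▸ hxX)
        · rcases hcd2 with h1 | h1
          · exact hor _ _ (hsubX _ h1) (hxe ▸ hxX)
          · exact hnotmem _ _ h1 rfl
      rw [SimpleGraph.deleteEdges_adj]
      refine ⟨?_, ?_⟩
      · rw [SimpleGraph.fromRel_adj]; exact ⟨hcd1, hcd2.imp (hsubX _) (hsubX _)⟩
      · intro hmem'; exact hne (by simpa using hmem')
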